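/- arXiv:0811.1265 — 3 statements merged into one kernel-verified Lean document; each statement's English description precedes it below -/
import Mathlib

section
/- Let H₁ be an m×m complex Hadamard matrix, H₂ an n×n complex Hadamard matrix, and λ : {1,…,m} × {1,…,n} → ℂ a function with |λ(i,l)| = 1 for all i,l. Then the twisted tensor product H with entries H_{(i,j),(k,l)} = (H₁)_{ik}(H₂)_{jl}λ(i,l) is an (mn)×(mn) complex Hadamard matrix. -/
/-- The twisted tensor product of two complex Hadamard matrices, with unimodular
twist `λ i l` depending on the first row index and second column index, is again a
complex Hadamard matrix. -/
theorem stmt_2 {m n : ℕ} (H₁ : Matrix (Fin m) (Fin m) ℂ) (H₂ : Matrix (Fin n) (Fin n) ℂ)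
    (h₁u : H₁ ∈ Matrix.unitaryGroup (Fin m) ℂ)
    (h₁e : ∀ i k, ‖H₁ i k‖ = 1 / Real.sqrt m)
    (h₂u : H₂ ∈ Matrix.unitaryGroup (Fin n) ℂ)
    (h₂e : ∀ j l, ‖H₂ j l‖ = 1 / Real.sqrt n)
    (lam : Fin m → Fin n → ℂ) (hlam : ∀ i l, ‖lam i l‖ = 1)
    (H : Matrix (Fin m × Fin n) (Fin m × Fin n) ℂ)
    (hH : ∀ p q, H p q = H₁ p.1 q.1 * H₂ p.2 q.2 * lam p.1 q.2) :
    H ∈ Matrix.unitaryGroup (Fin m × Fin n) ℂ ∧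
      ∀ p q, ‖H p q‖ = 1 / Real.sqrt (m * n) := by
  have hm1 : ∀ a b : Fin m, (∑ k, H₁ a k * star (H₁ b k)) = if a = b then 1 else 0 := by
    intro a b
    have h := Matrix.ext_iff.mpr (Matrix.mem_unitaryGroup_iff.mp h₁u) a b
    simpa [Matrix.mul_apply, Matrix.one_apply, Matrix.conjTranspose_apply] using h
  have hn1 : ∀ a b : Fin n, (∑ l, H₂ a l * star (H₂ b l)) = if a = b then 1 else 0 := by
    intro a b
    have h := Matrix.ext_iff.mpr (Matrix.mem_unitaryGroup_iff.mp h₂u) a b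
    simpa [Matrix.mul_apply, Matrix.one_apply, Matrix.conjTranspose_apply] using h
  have hlam1 : ∀ (i : Fin m) (l : Fin n), lam i l * star (lam i l) = 1 := by
    intro i l
    rw [Complex.star_def, Complex.mul_conj]
    rw [← Complex.sq_norm, hlam]
    norm_num
  constructor
  · rw [Matrix.mem_unitaryGroup_iff]
    ext p q
    rw [Matrix.mul_apply, Fintype.sum_prod_type]
    simp only [Matrix.star_apply, hH]
    have hterm : ∀ (k : Fin m) (l : Fin n),
        (H₁ p.1 k * H₂ p.2 l * lam p.1 l) * star (H₁ q.1 k * H₂ q.2 l * lam q.1 l)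
          = (H₁ p.1 k * star (H₁ q.1 k)) *
            ((H₂ p.2 l * star (H₂ q.2 l)) * (lam p.1 l * star (lam q.1 l))) := by
      intro k l
      simp only [star_mul']
      ring
    simp only [hterm]
    simp only [← Finset.mul_sum]
    rw [← Finset.sum_mul, hm1]
    by_cases hpq : p.1 = q.1
    · rw [hpq]
      simp only [if_pos rfl, if_true, one_mul]
      have : ∀ l : Fin n,
          (H₂ p.2 l * star (H₂ q.2 l)) * (lam q.1 l * star (lam q.1 l))
            = H₂ p.2 l * star (H₂ q.2 l) := by
        intro l
        rw [hlam1, mul_one]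
      simp only [this]
      rw [hn1]
      rcases p with ⟨p1, p2⟩; rcases q with ⟨q1, q2⟩
      simp only at hpq
      subst hpq
      simp [Matrix.one_apply, Prod.ext_iff]
    · rw [if_neg hpq, zero_mul, Matrix.one_apply,
        if_neg (fun h => hpq (by rw [h]))]
  · intro p q
    rw [hH, norm_mul, norm_mul, h₁e, h₂e, hlam, mul_one,
      Real.sqrt_mul (Nat.cast_nonneg m), div_mul_div_comm, one_mul]
end

section
/- Let H and K be finite groups and G a group generated by subgroups isomorphic to H and K together with an abelian normal subgroup N contained in G, such that N contains the commutator subgroup of G and G/N ≅ H ⊕ K via a map restricting to the identity on H and K. Then every element of G can be written uniquely as hkn with h ∈ H, k ∈ K, n ∈ N. -/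
/-- If `G` is generated by finite subgroups `H`, `K` and an abelian normal subgroup
`N` containing the commutator subgroup, with `G/N ≅ H ⊕ K` restricting to the
identity on `H` and `K`, then every element of `G` factors uniquely as `h k n`. -/
theorem stmt_9 {G : Type*} [Group G] (H K N : Subgroup G) [N.Normal]
    [Finite H] [Finite K]
    (hcomm : commutator G ≤ N)
    (habel : ∀ a b : N, a * b = b * a)
    (hgen : H ⊔ K ⊔ N = ⊤)
    (φ : (G ⧸ N) ≃* H × K)
    (hφH : ∀ h : H, φ ((h : G) : G ⧸ N) = (h, 1))
    (hφK : ∀ k : K, φ ((k : G) : G ⧸ N) = (1, k)) :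
    ∀ g : G, ∃! t : H × K × N, g = (t.1 : G) * (t.2.1 : G) * (t.2.2 : G) := by
  intro g
  set p := φ ((g : G) : G ⧸ N) with hp
  have hmem : ((p.1 : G) * (p.2 : G))⁻¹ * g ∈ N := by
    rw [← QuotientGroup.eq_one_iff (((p.1 : G) * (p.2 : G))⁻¹ * g)]
    apply φ.injective
    have : ((((p.1 : G) * (p.2 : G))⁻¹ * g : G) : G ⧸ N)
        = ((((p.1 : G) : G ⧸ N)) * (((p.2 : G) : G ⧸ N)))⁻¹ * ((g : G) : G ⧸ N) := by
      rfl
    rw [this, map_mul, map_inv, map_mul, hφH, hφK, map_one, ← hp]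
    ext <;> simp
  refine ⟨⟨p.1, p.2, ⟨_, hmem⟩⟩, by group, ?_⟩
  rintro ⟨h, k, n⟩ ht
  have hq : ((g : G) : G ⧸ N) = (((h : G) : G ⧸ N)) * (((k : G) : G ⧸ N)) := by
    rw [ht]
    have hn : (((n : G)) : G ⧸ N) = 1 := (QuotientGroup.eq_one_iff _).2 n.2
    show ((((h:G)) : G ⧸ N)) * (((k:G)) : G ⧸ N) * (((n:G)) : G ⧸ N) = _
    rw [hn, mul_one]
  have hpk : p = (h, k) := by
    rw [hp, hq, map_mul, hφH, hφK]
    ext <;> simp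
  have h1 : p.1 = h := by rw [hpk]
  have h2 : p.2 = k := by rw [hpk]
  refine Prod.ext h1.symm (Prod.ext h2.symm ?_)
  apply Subtype.ext
  show (n : G) = ((p.1 : G) * (p.2 : G))⁻¹ * g
  rw [h1, h2, ht]
  group
end

section
/- Let H = K = ℤ/2 ⊕ ℤ/2 and consider the subgroup N of (ℤ/2)^9 = maps from (H∖{1}) × (K∖{1}) to ℤ/2 generated by the nine specific elements b(hkhk) arising from the twist T = (1,...,1,-1) ∈ {±1}^{16} (i.e., for each pair (h,k) of nontrivial elements, b(hkhk) ∈ {±1}^{H×K} is given by b(hkhk)(h',k') = T(h',k')·T(hh',k')·T(h',kk')·T(hh',kk'), viewed modulo functions of the form f(h')g(k')). Then N ≅ (ℤ/2)^4, generated by the elements corresponding to (w,y), (w,z), (x,y), (x,z) where H = {1,w,x,wx}, K = {1,y,z,yz}. -/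
/-- The twist of the Hadamard 16-7 example: `T(h,k) = -1` (written additively as `1`
in `ℤ/2`) exactly at `(wx, yz) = ((1,1),(1,1))`. -/
def T13 : (ZMod 2 × ZMod 2) × (ZMod 2 × ZMod 2) → ZMod 2 :=
  fun p => if p = ((1, 1), (1, 1)) then 1 else 0

/-- The commutator generator `b(hkhk)` as a `±1`-valued (additively, `ℤ/2`-valued)
function on `H × K`. -/
def b13 (h k : ZMod 2 × ZMod 2) : (ZMod 2 × ZMod 2) × (ZMod 2 × ZMod 2) → ZMod 2 :=
  fun p => T13 (p.1, p.2) + T13 (h + p.1, p.2) + T13 (p.1, k + p.2) + T13 (h + p.1, k + p.2)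

/-- The subgroup of functions of the form `(h,k) ↦ f(h) + g(k)` (row and column
multiplications), modulo which elements are identified. -/
def W13 : AddSubgroup ((ZMod 2 × ZMod 2) × (ZMod 2 × ZMod 2) → ZMod 2) :=
  AddSubgroup.closure
    {v | ∃ f g : ZMod 2 × ZMod 2 → ZMod 2, v = fun p => f p.1 + g p.2}

abbrev V13 := (ZMod 2 × ZMod 2) × (ZMod 2 × ZMod 2) → ZMod 2

/-- Four linear functionals, given by summing over suitable 2×2 rectangles. -/
def psi0 : V13 → (Fin 4 → ZMod 2) := fun v =>
  ![v ((1,1),(1,1)) + v ((1,0),(1,1)) + v ((1,1),(1,0)) + v ((1,0),(1,0)),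
    v ((1,1),(1,1)) + v ((1,0),(1,1)) + v ((1,1),(0,1)) + v ((1,0),(0,1)),
    v ((1,1),(1,1)) + v ((0,1),(1,1)) + v ((1,1),(1,0)) + v ((0,1),(1,0)),
    v ((1,1),(1,1)) + v ((0,1),(1,1)) + v ((1,1),(0,1)) + v ((0,1),(0,1))]

/-- Linear combination of the four distinguished generators. -/
def sigma0 : (Fin 4 → ZMod 2) → V13 := fun v =>
  v 0 • b13 (1,0) (1,0) + v 1 • b13 (1,0) (0,1) + v 2 • b13 (0,1) (1,0) + v 3 • b13 (0,1) (0,1)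

lemma W13_mem (v : V13) :
    v ∈ W13 ↔ ∃ f g : ZMod 2 × ZMod 2 → ZMod 2, v = fun p => f p.1 + g p.2 := by
  constructor
  · intro hv
    refine AddSubgroup.closure_induction (fun x hx => hx) ⟨0, 0, by funext p; simp⟩ ?_ ?_ hv
    · rintro x y - - ⟨f1, g1, rfl⟩ ⟨f2, g2, rfl⟩
      refine ⟨f1 + f2, g1 + g2, ?_⟩
      funext p; simp only [Pi.add_apply]; ring
    · rintro x - ⟨f, g, rfl⟩
      refine ⟨-f, -g, ?_⟩
      funext p; simp only [Pi.neg_apply]; ring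
  · exact fun h => AddSubgroup.subset_closure h

lemma psi0_rowcol : ∀ f g : ZMod 2 × ZMod 2 → ZMod 2, psi0 (fun p => f p.1 + g p.2) = 0 := by
  decide

lemma psi0_add : ∀ x y : V13, psi0 (x + y) = psi0 x + psi0 y := by
  intro x y
  funext i
  fin_cases i <;> simp [psi0, Pi.add_apply] <;> ring

/-- `psi0` as an additive hom. -/
def Psi : V13 →+ (Fin 4 → ZMod 2) where
  toFun := psi0
  map_zero' := by decide
  map_add' := psi0_add

/-- `psi0` descends to the quotient by `W13`. -/
def Phi : V13 ⧸ W13 →+ (Fin 4 → ZMod 2) :=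
  QuotientAddGroup.lift W13 Psi (fun w hw => by
    obtain ⟨f, g, rfl⟩ := (W13_mem w).1 hw
    exact psi0_rowcol f g)

lemma Phi_mk (x : V13) : Phi (QuotientAddGroup.mk' W13 x) = psi0 x := rfl

set_option maxHeartbeats 1000000 in
lemma key13 : ∀ h k : ZMod 2 × ZMod 2, ∃ f g : ZMod 2 × ZMod 2 → ZMod 2,
    b13 h k = sigma0 (psi0 (b13 h k)) + fun p => f p.1 + g p.2 := by decide

lemma mk_rowcol (f g : ZMod 2 × ZMod 2 → ZMod 2) :
    QuotientAddGroup.mk' W13 (fun p => f p.1 + g p.2) = 0 := by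
  exact (QuotientAddGroup.eq_zero_iff _).2 ((W13_mem _).2 ⟨f, g, rfl⟩)

lemma mk_b13 (h k : ZMod 2 × ZMod 2) :
    QuotientAddGroup.mk' W13 (b13 h k) = QuotientAddGroup.mk' W13 (sigma0 (psi0 (b13 h k))) := by
  obtain ⟨f, g, hfg⟩ := key13 h k
  conv_lhs => rw [hfg]
  rw [map_add, mk_rowcol, add_zero]

lemma psi0_sigma0 : ∀ v : Fin 4 → ZMod 2, psi0 (sigma0 v) = v := by decide

lemma sigma0_add (v w : Fin 4 → ZMod 2) : sigma0 (v + w) = sigma0 v + sigma0 w := by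
  simp only [sigma0, Pi.add_apply, add_smul]
  abel

lemma sigma0_zero : sigma0 0 = 0 := by
  simp [sigma0]

lemma negV (x : V13) : -x = x := by
  funext p
  exact (by decide : ∀ a : ZMod 2, -a = a) _

/-- In the Hadamard 16-7 example, the subgroup `N` generated by the nine elements
`b(hkhk)` (for nontrivial `h ∈ H`, `k ∈ K`), taken modulo row/column functions, is
`(ℤ/2)⁴`, generated by the elements corresponding to `(w,y), (w,z), (x,y), (x,z)`
where `w = (1,0)`, `x = (0,1)`, `y = (1,0)`, `z = (0,1)`. -/
theorem stmt_13
    (N : AddSubgroup (((ZMod 2 × ZMod 2) × (ZMod 2 × ZMod 2) → ZMod 2) ⧸ W13))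
    (hN : N = AddSubgroup.closure
      {q | ∃ h k : ZMod 2 × ZMod 2, h ≠ 0 ∧ k ≠ 0 ∧ q = QuotientAddGroup.mk' W13 (b13 h k)}) :
    N = AddSubgroup.closure
        {QuotientAddGroup.mk' W13 (b13 (1, 0) (1, 0)),
         QuotientAddGroup.mk' W13 (b13 (1, 0) (0, 1)),
         QuotientAddGroup.mk' W13 (b13 (0, 1) (1, 0)),
         QuotientAddGroup.mk' W13 (b13 (0, 1) (0, 1))} ∧
      Nonempty (N ≃+ (Fin 4 → ZMod 2)) := by
  subst hN
  set S4 : Set (V13 ⧸ W13) :=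
    {QuotientAddGroup.mk' W13 (b13 (1, 0) (1, 0)),
     QuotientAddGroup.mk' W13 (b13 (1, 0) (0, 1)),
     QuotientAddGroup.mk' W13 (b13 (0, 1) (1, 0)),
     QuotientAddGroup.mk' W13 (b13 (0, 1) (0, 1))} with hS4
  -- every sigma0-image lies in the closure of the four generators
  have mem_M : ∀ v : Fin 4 → ZMod 2,
      QuotientAddGroup.mk' W13 (sigma0 v) ∈ AddSubgroup.closure S4 := by
    intro v
    have smul_mem : ∀ (a : ZMod 2) (x : V13), QuotientAddGroup.mk' W13 x ∈ AddSubgroup.closure S4 →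
        QuotientAddGroup.mk' W13 (a • x) ∈ AddSubgroup.closure S4 := by
      intro a x hx
      rcases (by decide : ∀ a : ZMod 2, a = 0 ∨ a = 1) a with h | h
      · rw [h, zero_smul, map_zero]; exact zero_mem _
      · rw [h, one_smul]; exact hx
    unfold sigma0
    rw [map_add, map_add, map_add]
    refine add_mem (add_mem (add_mem ?_ ?_) ?_) ?_ <;> apply smul_mem <;>
      apply AddSubgroup.subset_closure <;> simp [hS4, Set.mem_insert_iff]
  -- every element of the closure of the four generators is a sigma0-image
  have M_range : ∀ q ∈ AddSubgroup.closure S4,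
      ∃ v : Fin 4 → ZMod 2, q = QuotientAddGroup.mk' W13 (sigma0 v) := by
    intro q hq
    refine AddSubgroup.closure_induction ?_ ?_ ?_ ?_ hq
    · intro x hx
      simp only [hS4, Set.mem_insert_iff, Set.mem_singleton_iff] at hx
      rcases hx with rfl | rfl | rfl | rfl
      exacts [⟨psi0 (b13 (1,0) (1,0)), mk_b13 _ _⟩, ⟨psi0 (b13 (1,0) (0,1)), mk_b13 _ _⟩,
        ⟨psi0 (b13 (0,1) (1,0)), mk_b13 _ _⟩, ⟨psi0 (b13 (0,1) (0,1)), mk_b13 _ _⟩]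
    · exact ⟨0, by rw [sigma0_zero, map_zero]⟩
    · rintro x y - - ⟨v, rfl⟩ ⟨w, rfl⟩
      exact ⟨v + w, by rw [sigma0_add, map_add]⟩
    · rintro x - ⟨v, rfl⟩
      exact ⟨v, by rw [← map_neg, negV]⟩
  have hEq : AddSubgroup.closure
      {q | ∃ h k : ZMod 2 × ZMod 2, h ≠ 0 ∧ k ≠ 0 ∧ q = QuotientAddGroup.mk' W13 (b13 h k)}
      = AddSubgroup.closure S4 := by
    apply le_antisymm
    · rw [AddSubgroup.closure_le]
      rintro q ⟨h, k, hh, hk, rfl⟩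
      rw [SetLike.mem_coe, mk_b13 h k]
      exact mem_M _
    · rw [AddSubgroup.closure_le]
      intro q hq
      simp only [hS4, Set.mem_insert_iff, Set.mem_singleton_iff] at hq
      rw [SetLike.mem_coe]
      rcases hq with rfl | rfl | rfl | rfl
      · exact AddSubgroup.subset_closure ⟨(1,0), (1,0), by decide, by decide, rfl⟩
      · exact AddSubgroup.subset_closure ⟨(1,0), (0,1), by decide, by decide, rfl⟩
      · exact AddSubgroup.subset_closure ⟨(0,1), (1,0), by decide, by decide, rfl⟩
      · exact AddSubgroup.subset_closure ⟨(0,1), (0,1), by decide, by decide, rfl⟩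
  refine ⟨hEq, ?_⟩
  rw [hEq]
  refine ⟨AddEquiv.ofBijective (Phi.comp (AddSubgroup.closure S4).subtype) ⟨?_, ?_⟩⟩
  · rw [injective_iff_map_eq_zero]
    rintro ⟨q, hq⟩ hx
    obtain ⟨v, rfl⟩ := M_range q hq
    have hv : v = 0 := by
      have : Phi (QuotientAddGroup.mk' W13 (sigma0 v)) = v := by
        rw [Phi_mk, psi0_sigma0]
      rw [← this]
      exact hx
    apply Subtype.ext
    show QuotientAddGroup.mk' W13 (sigma0 v) = 0
    rw [hv, sigma0_zero, map_zero]
  · intro v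
    refine ⟨⟨QuotientAddGroup.mk' W13 (sigma0 v), mem_M v⟩, ?_⟩
    show Phi (QuotientAddGroup.mk' W13 (sigma0 v)) = v
    rw [Phi_mk, psi0_sigma0]
end
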